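/- Let p, q be twice continuously differentiable real functions on an open interval (a,b) and let f be a solution of f'' + p·f' + q·f = 0 on (a,b) (so f is four times differentiable). Then for every x in (a,b) with p'(x) ≠ 0, v(f)''(x) + (p(x) − p''(x)/p'(x))·v(f)'(x) + (2p'(x) − p''(x)p(x)/p'(x))·v(f)(x) = 2p'(x)·f'(x)² + f(x)²·p'(x)·(q'/p')'(x) + 2q'(x)·f'(x)·f(x). -/

import Mathlib

/-- v h = (deriv h)^2 - (second derivative of h) * h. -/
noncomputable def v (f : ℝ → ℝ) (x : ℝ) : ℝ := (deriv f x) ^ 2 - deriv^[2] f x * f x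


theorem stmt_7 (a b : ℝ) (hab : a < b) (p q f : ℝ → ℝ)
    (hp : ContDiffOn ℝ 2 p (Set.Ioo a b)) (hq : ContDiffOn ℝ 2 q (Set.Ioo a b))
    (hf : ContDiffOn ℝ 4 f (Set.Ioo a b))
    (hode : ∀ x ∈ Set.Ioo a b, deriv^[2] f x + p x * deriv f x + q x * f x = 0) :
    ∀ x ∈ Set.Ioo a b, deriv p x ≠ 0 →
      deriv^[2] (v f) x + (p x - deriv^[2] p x / deriv p x) * deriv (v f) x +
          (2 * deriv p x - deriv^[2] p x * p x / deriv p x) * v f x =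
        2 * deriv p x * (deriv f x) ^ 2 +
          (f x) ^ 2 * deriv p x * deriv (fun y => deriv q y / deriv p y) x +
          2 * deriv q x * deriv f x * f x := by
  intro x hx hP1
  have hs : IsOpen (Set.Ioo a b) := isOpen_Ioo
  have h2f : deriv^[2] f = deriv (deriv f) := rfl
  have h3f : deriv^[3] f = deriv (deriv (deriv f)) := rfl
  have h2p : deriv^[2] p = deriv (deriv p) := rfl
  -- differentiability facts
  have hf1 : ContDiffOn ℝ 3 (deriv f) (Set.Ioo a b) :=
    hf.deriv_of_isOpen hs (by norm_num)
  have hf2 : ContDiffOn ℝ 2 (deriv (deriv f)) (Set.Ioo a b) :=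
    hf1.deriv_of_isOpen hs (by norm_num)
  have hf3 : ContDiffOn ℝ 1 (deriv (deriv (deriv f))) (Set.Ioo a b) :=
    hf2.deriv_of_isOpen hs (by norm_num)
  have hp1 : ContDiffOn ℝ 1 (deriv p) (Set.Ioo a b) :=
    hp.deriv_of_isOpen hs (by norm_num)
  have hq1 : ContDiffOn ℝ 1 (deriv q) (Set.Ioo a b) :=
    hq.deriv_of_isOpen hs (by norm_num)
  have df0 : ∀ y ∈ Set.Ioo a b, DifferentiableAt ℝ f y := fun y hy =>
    (hf.differentiableOn (by norm_num)).differentiableAt (hs.mem_nhds hy)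
  have df1 : ∀ y ∈ Set.Ioo a b, DifferentiableAt ℝ (deriv f) y := fun y hy =>
    (hf1.differentiableOn (by norm_num)).differentiableAt (hs.mem_nhds hy)
  have df2 : ∀ y ∈ Set.Ioo a b, DifferentiableAt ℝ (deriv (deriv f)) y := fun y hy =>
    (hf2.differentiableOn (by norm_num)).differentiableAt (hs.mem_nhds hy)
  have df3 : ∀ y ∈ Set.Ioo a b, DifferentiableAt ℝ (deriv (deriv (deriv f))) y := fun y hy =>
    (hf3.differentiableOn (by norm_num)).differentiableAt (hs.mem_nhds hy)
  have dp0 : ∀ y ∈ Set.Ioo a b, DifferentiableAt ℝ p y := fun y hy =>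
    (hp.differentiableOn (by norm_num)).differentiableAt (hs.mem_nhds hy)
  have dp1 : ∀ y ∈ Set.Ioo a b, DifferentiableAt ℝ (deriv p) y := fun y hy =>
    (hp1.differentiableOn (by norm_num)).differentiableAt (hs.mem_nhds hy)
  have dq0 : ∀ y ∈ Set.Ioo a b, DifferentiableAt ℝ q y := fun y hy =>
    (hq.differentiableOn (by norm_num)).differentiableAt (hs.mem_nhds hy)
  have dq1 : ∀ y ∈ Set.Ioo a b, DifferentiableAt ℝ (deriv q) y := fun y hy =>
    (hq1.differentiableOn (by norm_num)).differentiableAt (hs.mem_nhds hy)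
  -- first derivative of v f on the interval
  have hvd : ∀ y ∈ Set.Ioo a b, HasDerivAt (v f)
      (deriv f y * deriv (deriv f) y - deriv (deriv (deriv f)) y * f y) y := by
    intro y hy
    have h0 : HasDerivAt f (deriv f y) y := (df0 y hy).hasDerivAt
    have h1 : HasDerivAt (deriv f) (deriv (deriv f) y) y := (df1 y hy).hasDerivAt
    have h2 : HasDerivAt (deriv (deriv f)) (deriv (deriv (deriv f)) y) y :=
      (df2 y hy).hasDerivAt
    have H := (h1.pow 2).sub (h2.mul h0)
    have hfun : (fun z => deriv f z ^ 2 - deriv (deriv f) z * f z) = v f := by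
      funext z; simp [v, h2f]
    rw [show (deriv f ^ 2 - deriv (deriv f) * f) = v f from hfun] at H
    refine H.congr_deriv ?_
    push_cast
    ring
  have hvderiv : ∀ y ∈ Set.Ioo a b, deriv (v f) y =
      deriv f y * deriv (deriv f) y - deriv (deriv (deriv f)) y * f y :=
    fun y hy => (hvd y hy).deriv
  -- second derivative of v f at x
  have hvev : deriv (v f) =ᶠ[nhds x]
      (fun y => deriv f y * deriv (deriv f) y - deriv (deriv (deriv f)) y * f y) := by
    filter_upwards [hs.mem_nhds hx] with y hy using hvderiv y hy
  have hv2 : deriv^[2] (v f) x =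
      deriv (deriv f) x * deriv (deriv f) x + deriv f x * deriv (deriv (deriv f)) x -
        (deriv (deriv (deriv (deriv f))) x * f x +
          deriv (deriv (deriv f)) x * deriv f x) := by
    have h0 : HasDerivAt f (deriv f x) x := (df0 x hx).hasDerivAt
    have h1 : HasDerivAt (deriv f) (deriv (deriv f) x) x := (df1 x hx).hasDerivAt
    have h2 : HasDerivAt (deriv (deriv f)) (deriv (deriv (deriv f)) x) x :=
      (df2 x hx).hasDerivAt
    have h3 : HasDerivAt (deriv (deriv (deriv f))) (deriv (deriv (deriv (deriv f))) x) x :=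
      (df3 x hx).hasDerivAt
    have H := (h1.mul h2).sub (h3.mul h0)
    show deriv (deriv (v f)) x = _
    rw [hvev.deriv_eq]
    exact H.deriv
  -- first derivative of the ODE
  have hode1 : ∀ y ∈ Set.Ioo a b,
      deriv (deriv (deriv f)) y + (deriv p y * deriv f y + p y * deriv (deriv f) y) +
        (deriv q y * f y + q y * deriv f y) = 0 := by
    intro y hy
    have h0 : HasDerivAt f (deriv f y) y := (df0 y hy).hasDerivAt
    have h1 : HasDerivAt (deriv f) (deriv (deriv f) y) y := (df1 y hy).hasDerivAt
    have h2 : HasDerivAt (deriv (deriv f)) (deriv (deriv (deriv f)) y) y :=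
      (df2 y hy).hasDerivAt
    have hpy : HasDerivAt p (deriv p y) y := (dp0 y hy).hasDerivAt
    have hqy : HasDerivAt q (deriv q y) y := (dq0 y hy).hasDerivAt
    have H := (h2.add ((hpy.mul h1).add (hqy.mul h0)))
    have hzero : (fun z => deriv (deriv f) z + (p z * deriv f z + q z * f z)) =ᶠ[nhds y]
        (fun _ => (0 : ℝ)) := by
      filter_upwards [hs.mem_nhds hy] with z hz
      have := hode z hz
      rw [h2f] at this
      linarith
    have := (show HasDerivAt (fun z => deriv (deriv f) z + (p z * deriv f z + q z * f z)) _ y from H).deriv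
    rw [hzero.deriv_eq, deriv_const] at this
    linarith [this]
  -- second derivative of the ODE at x
  have hode2 : deriv (deriv (deriv (deriv f))) x +
      (deriv (deriv p) x * deriv f x + deriv p x * deriv (deriv f) x +
        (deriv p x * deriv (deriv f) x + p x * deriv (deriv (deriv f)) x)) +
      (deriv (deriv q) x * f x + deriv q x * deriv f x +
        (deriv q x * deriv f x + q x * deriv (deriv f) x)) = 0 := by
    have h0 : HasDerivAt f (deriv f x) x := (df0 x hx).hasDerivAt
    have h1 : HasDerivAt (deriv f) (deriv (deriv f) x) x := (df1 x hx).hasDerivAt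
    have h2 : HasDerivAt (deriv (deriv f)) (deriv (deriv (deriv f)) x) x :=
      (df2 x hx).hasDerivAt
    have h3 : HasDerivAt (deriv (deriv (deriv f))) (deriv (deriv (deriv (deriv f))) x) x :=
      (df3 x hx).hasDerivAt
    have hpx : HasDerivAt p (deriv p x) x := (dp0 x hx).hasDerivAt
    have hp1x : HasDerivAt (deriv p) (deriv (deriv p) x) x := (dp1 x hx).hasDerivAt
    have hqx : HasDerivAt q (deriv q x) x := (dq0 x hx).hasDerivAt
    have hq1x : HasDerivAt (deriv q) (deriv (deriv q) x) x := (dq1 x hx).hasDerivAt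
    have H := h3.add ((((hp1x.mul h1).add (hpx.mul h2)).add
      ((hq1x.mul h0).add (hqx.mul h1))))
    have hzero : (fun z => deriv (deriv (deriv f)) z +
        ((deriv p z * deriv f z + p z * deriv (deriv f) z) +
          (deriv q z * f z + q z * deriv f z))) =ᶠ[nhds x] (fun _ => (0 : ℝ)) := by
      filter_upwards [hs.mem_nhds hx] with z hz
      have := hode1 z hz
      linarith
    have := (show HasDerivAt (fun z => deriv (deriv (deriv f)) z +
        ((deriv p z * deriv f z + p z * deriv (deriv f) z) +
          (deriv q z * f z + q z * deriv f z))) _ x from H).deriv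
    rw [hzero.deriv_eq, deriv_const] at this
    linarith [this]
  -- derivative of q'/p' at x
  have hqp : deriv (fun y => deriv q y / deriv p y) x =
      (deriv (deriv q) x * deriv p x - deriv q x * deriv (deriv p) x) / (deriv p x) ^ 2 :=
    (((dq1 x hx).hasDerivAt).div ((dp1 x hx).hasDerivAt) hP1).deriv
  -- assemble
  have R0 := hode x hx
  rw [h2f] at R0
  have R1 := hode1 x hx
  have hvx : v f x = (deriv f x) ^ 2 - deriv (deriv f) x * f x := by simp [v, h2f]
  rw [hv2, hvderiv x hx, hvx, hqp, h2p]
  have hinv : deriv p x * (deriv p x)⁻¹ = 1 := mul_inv_cancel₀ hP1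
  linear_combination (deriv (deriv f) x - deriv (deriv p) x / deriv p x * deriv f x) * R0 +
    (deriv (deriv p) x * f x / deriv p x) * R1 - f x * hode2 +
    (-(deriv f x * f x * deriv (deriv p) x) +
      f x ^ 2 * deriv (deriv p) x * deriv q x * (deriv p x)⁻¹ -
      f x ^ 2 * deriv (deriv q) x * (deriv p x * (deriv p x)⁻¹ + 1)) * hinv
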